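/- For any three quantum states ρ, σ, τ on the same finite-dimensional Hilbert space, arccos F(ρ,τ) ≤ arccos F(ρ,σ) + arccos F(σ,τ), where F is the Uhlmann fidelity. Equivalently, if arccos F(ρ,σ) + arccos F(σ,τ) ≤ π/2, then F(ρ,τ) ≥ cos(arccos F(ρ,σ) + arccos F(σ,τ)). -/

import Mathlib

open Matrix Kronecker
open scoped ComplexOrder
open scoped Classical in
noncomputable def msqrt {n : Type*} [Fintype n] [DecidableEq n] (A : Matrix n n ℂ) : Matrix n n ℂ :=
  if h : A.PosSemidef then
    (h.1.eigenvectorUnitary : Matrix n n ℂ) * diagonal ((↑) ∘ (√·) ∘ h.1.eigenvalues) *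
      (star h.1.eigenvectorUnitary : Matrix n n ℂ) else 0
noncomputable def fid {n : Type*} [Fintype n] [DecidableEq n] (ρ σ : Matrix n n ℂ) : ℝ :=
  ((msqrt (msqrt ρ * σ * msqrt ρ)).trace).re
def IsState {n : Type*} [Fintype n] [DecidableEq n] (ρ : Matrix n n ℂ) : Prop :=
  ρ.PosSemidef ∧ ρ.trace = 1
/-- Complete positivity via Kraus decomposition. -/
def IsCP {n m : Type*} [Fintype n] [DecidableEq n] [Fintype m] [DecidableEq m]
    (Φ : Matrix n n ℂ → Matrix m m ℂ) : Prop :=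
  ∃ (k : ℕ) (K : Fin k → Matrix m n ℂ), ∀ ρ, Φ ρ = ∑ i, K i * ρ * (K i)ᴴ

section Aux
variable {n : ℕ}
lemma msqrt_eq {A : Matrix (Fin n) (Fin n) ℂ} (h : A.PosSemidef) : msqrt A =
    (h.1.eigenvectorUnitary : Matrix (Fin n) (Fin n) ℂ) * diagonal ((↑) ∘ (√·) ∘ h.1.eigenvalues) *
      (star h.1.eigenvectorUnitary : Matrix (Fin n) (Fin n) ℂ) := dif_pos h

open scoped MatrixOrder in
lemma msqrt_eq_cfc {A : Matrix (Fin n) (Fin n) ℂ} (h : A.PosSemidef) : msqrt A = CFC.sqrt A := by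
  rw [CFC.sqrt_eq_real_sqrt A h.nonneg, cfcₙ_eq_cfc, h.1.cfc_eq]
  unfold msqrt; rw [dif_pos h]
  simp [IsHermitian.cfc, Unitary.conjStarAlgAut_apply]

open scoped MatrixOrder in
lemma msqrt_posSemidef {A : Matrix (Fin n) (Fin n) ℂ} (h : A.PosSemidef) :
    (msqrt A).PosSemidef := by
    rw [msqrt_eq_cfc h]; exact nonneg_iff_posSemidef.mp (CFC.sqrt_nonneg A)

open scoped MatrixOrder in
lemma msqrt_mul_self {A : Matrix (Fin n) (Fin n) ℂ} (h : A.PosSemidef) :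
    msqrt A * msqrt A = A := by
    rw [msqrt_eq_cfc h]; exact CFC.sqrt_mul_sqrt_self A (Matrix.PosSemidef.nonneg h)

lemma msqrt_herm {A : Matrix (Fin n) (Fin n) ℂ} (h : A.PosSemidef) :
    (msqrt A)ᴴ = msqrt A := (msqrt_posSemidef h).1

/-- embedding of matrices into Euclidean space -/
noncomputable def emb (M : Matrix (Fin n) (Fin n) ℂ) : EuclideanSpace ℂ (Fin n × Fin n) :=
  (EuclideanSpace.equiv (Fin n × Fin n) ℂ).symm (fun p => M p.1 p.2)

lemma inner_emb (X Y : Matrix (Fin n) (Fin n) ℂ) :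
    (inner ℂ (emb X) (emb Y) : ℂ) = (Xᴴ * Y).trace := by
  simp only [PiLp.inner_apply, RCLike.inner_apply', emb, Matrix.trace, Matrix.diag,
    Matrix.mul_apply, Matrix.conjTranspose_apply]
  rw [Fintype.sum_prod_type]
  rw [Finset.sum_comm]
  simp [mul_comm]

lemma polar (M : Matrix (Fin n) (Fin n) ℂ) :
    ∃ U : Matrix (Fin n) (Fin n) ℂ, Uᴴ * U = 1 ∧ U * Uᴴ = 1 ∧ M = U * msqrt (Mᴴ * M) := by
  have hH := Matrix.posSemidef_conjTranspose_mul_self M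
  set V : Matrix (Fin n) (Fin n) ℂ := (hH.1.eigenvectorUnitary : Matrix (Fin n) (Fin n) ℂ) with hVdef
  set d : Fin n → ℝ := hH.1.eigenvalues with hddef
  have hV1 : star V * V = 1 := Matrix.mem_unitaryGroup_iff'.mp hH.1.eigenvectorUnitary.2
  have hV2 : V * star V = 1 := Matrix.mem_unitaryGroup_iff.mp hH.1.eigenvectorUnitary.2
  set N : Matrix (Fin n) (Fin n) ℂ := M * V with hNdef
  have hNN : Nᴴ * N = diagonal (RCLike.ofReal ∘ d) := by
    have := hH.1.conjStarAlgAut_star_eigenvectorUnitary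
    have h : star V * (Mᴴ * M) * V = diagonal (RCLike.ofReal ∘ d) := by
      simpa [Unitary.conjStarAlgAut_apply] using hH.1.conjStarAlgAut_star_eigenvectorUnitary
    rw [hNdef, conjTranspose_mul, mul_assoc Vᴴ Mᴴ, ← mul_assoc Mᴴ M V,
      ← mul_assoc Vᴴ (Mᴴ * M) V, ← Matrix.star_eq_conjTranspose V]
    exact h
  have hdnn : ∀ j, 0 ≤ d j := fun j => hH.eigenvalues_nonneg j
  have hcol : ∀ j, d j = 0 → ∀ i, N i j = 0 := by
    intro j hj i
    have h0 : (Nᴴ * N) j j = 0 := by rw [hNN]; simp [hj]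
    rw [Matrix.mul_apply] at h0
    simp only [conjTranspose_apply] at h0
    have h1 : ∑ k, (Complex.normSq (N k j) : ℂ) = 0 := by
      rw [← h0]; congr 1; ext k
      rw [RCLike.star_def, mul_comm, Complex.mul_conj]
    have h2 : ∑ k, Complex.normSq (N k j) = 0 := by
      exact_mod_cast h1
    have h3 := (Finset.sum_eq_zero_iff_of_nonneg (fun k _ => Complex.normSq_nonneg (N k j))).mp h2
    exact Complex.normSq_eq_zero.mp (h3 i (Finset.mem_univ i))
  -- candidate columns
  set w : Fin n → EuclideanSpace ℂ (Fin n) :=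
    fun j => (EuclideanSpace.equiv (Fin n) ℂ).symm
      (fun i => ((Real.sqrt (d j))⁻¹ : ℂ) * N i j) with hwdef
  have hinnerw : ∀ j k : Fin n, (inner ℂ (w j) (w k) : ℂ) =
      ((Real.sqrt (d j))⁻¹ : ℂ) * ((Real.sqrt (d k))⁻¹ : ℂ) * (Nᴴ * N) j k := by
    intro j k
    simp only [PiLp.inner_apply, RCLike.inner_apply', hwdef, Matrix.mul_apply,
      conjTranspose_apply]
    rw [Finset.mul_sum]
    congr 1; ext i
    show (starRingEnd ℂ) (((Real.sqrt (d j) : ℂ))⁻¹ * N i j) * ((((Real.sqrt (d k)) : ℂ))⁻¹ * N i k)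
      = ((Real.sqrt (d j) : ℂ))⁻¹ * ((Real.sqrt (d k) : ℂ))⁻¹ * ((starRingEnd ℂ) (N i j) * N i k)
    rw [_root_.map_mul, map_inv₀, Complex.conj_ofReal]
    ring
  have horth : Orthonormal ℂ (Set.restrict {j | d j ≠ 0} w) := by
    rw [orthonormal_iff_ite]
    rintro ⟨j, hj⟩ ⟨k, hk⟩
    change inner ℂ (w j) (w k) = _
    rw [hinnerw, hNN]
    by_cases hjk : j = k
    · subst hjk
      rw [if_pos (Subtype.ext rfl)]
      simp only [diagonal_apply_eq, Function.comp_apply]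
      have hs : (Real.sqrt (d j) : ℂ) ≠ 0 := by
        simp only [ne_eq, Complex.ofReal_eq_zero]
        exact Real.sqrt_ne_zero'.mpr (lt_of_le_of_ne (hdnn j) (Ne.symm hj))
      have hmul : ((d j : ℂ)) = (Real.sqrt (d j) : ℂ) * (Real.sqrt (d j) : ℂ) := by
        exact_mod_cast congrArg Complex.ofReal (Real.mul_self_sqrt (hdnn j)).symm
      show ((Real.sqrt (d j) : ℂ))⁻¹ * ((Real.sqrt (d j) : ℂ))⁻¹ * ((d j : ℂ)) = 1
      rw [hmul]
      field_simp
    · rw [if_neg (fun h => hjk (congrArg Subtype.val h)), diagonal_apply_ne _ hjk]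
      ring
  have card : Module.finrank ℂ (EuclideanSpace ℂ (Fin n)) = Fintype.card (Fin n) := by
    simp [finrank_euclideanSpace]
  obtain ⟨b, hb⟩ := horth.exists_orthonormalBasis_extension_of_card_eq card
  set U₀ : Matrix (Fin n) (Fin n) ℂ := Matrix.of (fun i j => b j i) with hU₀def
  have hU₀ : U₀ᴴ * U₀ = 1 := by
    ext j k
    rw [Matrix.mul_apply]
    simp only [conjTranspose_apply, hU₀def, Matrix.of_apply, Matrix.one_apply]
    have := (orthonormal_iff_ite.mp b.orthonormal) j k
    simp only [PiLp.inner_apply, RCLike.inner_apply'] at this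
    rw [← this]
    rfl
  have hN : N = U₀ * diagonal (fun j => (Real.sqrt (d j) : ℂ)) := by
    ext i j
    rw [Matrix.mul_diagonal]
    by_cases hj : d j = 0
    · simp [hcol j hj i, hj]
    · have hbj := hb j hj
      have : U₀ i j = ((Real.sqrt (d j))⁻¹ : ℂ) * N i j := by
        rw [hU₀def]
        simp only [Matrix.of_apply, hbj, hwdef]
        rfl
      rw [this]
      have hs : (Real.sqrt (d j) : ℂ) ≠ 0 := by
        simp only [ne_eq, Complex.ofReal_eq_zero]
        exact Real.sqrt_ne_zero'.mpr (lt_of_le_of_ne (hdnn j) (Ne.symm hj))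
      field_simp
  have hU₀' : U₀ * U₀ᴴ = 1 := mul_eq_one_comm.mp hU₀
  have hVH : (star V)ᴴ = V := by
    rw [Matrix.star_eq_conjTranspose, conjTranspose_conjTranspose]
  refine ⟨U₀ * star V, ?_, ?_, ?_⟩
  · rw [conjTranspose_mul, hVH, mul_assoc V U₀ᴴ, ← mul_assoc U₀ᴴ U₀ (star V), hU₀, one_mul, hV2]
  · rw [conjTranspose_mul, hVH, mul_assoc, ← mul_assoc (star V) V, hV1, one_mul, hU₀']
  · have hsq : msqrt (Mᴴ * M) = V * diagonal (fun j => (Real.sqrt (d j) : ℂ)) * star V := by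
      rw [msqrt_eq hH]; rfl
    have hM : M = N * star V := by rw [hNdef, mul_assoc, hV2, mul_one]
    rw [hsq]
    conv_lhs => rw [hM, hN]
    simp only [mul_assoc]
    rw [← mul_assoc (star V) V, hV1, one_mul]

end Aux

section Sphere
lemma real_sq_key (b e s1 s2 : ℝ) (hs1 : 0 ≤ s1) (hs2 : 0 ≤ s2) :
    (s1 * s2 + |b * e|) ^ 2 ≤ (b ^ 2 + s1 ^ 2) * (e ^ 2 + s2 ^ 2) := by
  rw [abs_mul]
  nlinarith [sq_nonneg (s1 * |e| - s2 * |b|), sq_abs b, sq_abs e,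
    abs_nonneg b, abs_nonneg e, mul_nonneg (abs_nonneg b) (abs_nonneg e)]

lemma real_final (a b c e r : ℝ) (hab : a ^ 2 + b ^ 2 ≤ 1) (hce : c ^ 2 + e ^ 2 ≤ 1)
    (hr : |r| ≤ Real.sqrt (1 - (a ^ 2 + b ^ 2)) * Real.sqrt (1 - (c ^ 2 + e ^ 2))) :
    a * c - Real.sqrt (1 - a ^ 2) * Real.sqrt (1 - c ^ 2) ≤ a * c + b * e + r := by
  set s1 := Real.sqrt (1 - (a ^ 2 + b ^ 2)) with hs1
  set s2 := Real.sqrt (1 - (c ^ 2 + e ^ 2)) with hs2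
  have hs1nn : 0 ≤ s1 := Real.sqrt_nonneg _
  have hs2nn : 0 ≤ s2 := Real.sqrt_nonneg _
  have hs1sq : s1 ^ 2 = 1 - (a ^ 2 + b ^ 2) := Real.sq_sqrt (by linarith)
  have hs2sq : s2 ^ 2 = 1 - (c ^ 2 + e ^ 2) := Real.sq_sqrt (by linarith)
  have key : s1 * s2 + |b * e| ≤ Real.sqrt (1 - a ^ 2) * Real.sqrt (1 - c ^ 2) := by
    rw [show Real.sqrt (1 - a ^ 2) * Real.sqrt (1 - c ^ 2)
        = Real.sqrt ((1 - a ^ 2) * (1 - c ^ 2)) from (Real.sqrt_mul (by nlinarith) _).symm]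
    rw [show (1 - a ^ 2) * (1 - c ^ 2) = (b ^ 2 + s1 ^ 2) * (e ^ 2 + s2 ^ 2) from by
      rw [hs1sq, hs2sq]; ring]
    have hnn : 0 ≤ s1 * s2 + |b * e| := by positivity
    rw [show s1 * s2 + |b * e| = Real.sqrt ((s1 * s2 + |b * e|) ^ 2) from
      (Real.sqrt_sq hnn).symm]
    exact Real.sqrt_le_sqrt (real_sq_key b e s1 s2 hs1nn hs2nn)
  have h5 : -(b * e) ≤ |b * e| := neg_le_abs _
  linarith [key, h5, (abs_le.mp hr).1]

-- Spherical triangle inequality core, abstract inner ℂ product space version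
lemma sphere_ineq {E : Type*} [NormedAddCommGroup E] [InnerProductSpace ℂ E]
    (x y z : E) (hx : ‖x‖ = 1) (hy : ‖y‖ = 1) (hz : ‖z‖ = 1) :
    (inner ℂ x y : ℂ).re * (inner ℂ y z : ℂ).re
      - Real.sqrt (1 - (inner ℂ x y : ℂ).re ^ 2) * Real.sqrt (1 - (inner ℂ y z : ℂ).re ^ 2)
      ≤ (inner ℂ x z : ℂ).re := by
  set α : ℂ := inner ℂ y x with hα
  set β : ℂ := inner ℂ y z with hβ
  have hyy : (inner ℂ y y : ℂ) = 1 := by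
    rw [inner_self_eq_norm_sq_to_K, hy]; norm_num
  have hxx : (inner ℂ x x : ℂ) = 1 := by
    rw [inner_self_eq_norm_sq_to_K, hx]; norm_num
  have hzz : (inner ℂ z z : ℂ) = 1 := by
    rw [inner_self_eq_norm_sq_to_K, hz]; norm_num
  set u : E := x - α • y with hu
  set v : E := z - β • y with hv
  have hyu : (inner ℂ y u : ℂ) = 0 := by
    rw [hu, inner_sub_right, inner_smul_right, hyy, mul_one, hα, sub_self]
  have hyv : (inner ℂ y v : ℂ) = 0 := by
    rw [hv, inner_sub_right, inner_smul_right, hyy, mul_one, hβ, sub_self]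
  have huy : (inner ℂ u y : ℂ) = 0 := by
    rw [← inner_conj_symm, hyu, map_zero]
  have hvy : (inner ℂ v y : ℂ) = 0 := by
    rw [← inner_conj_symm, hyv, map_zero]
  have hxy' : (inner ℂ x y : ℂ) = starRingEnd ℂ α := by rw [hα, inner_conj_symm]
  have hxz : (inner ℂ x z : ℂ) = starRingEnd ℂ α * β + inner ℂ u v := by
    have hx' : x = u + α • y := by rw [hu]; abel
    have hz' : z = v + β • y := by rw [hv]; abel
    conv_lhs => rw [hx', hz']
    simp only [inner_add_left, inner_add_right, inner_smul_left, inner_smul_right,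
      hyy, huy, hyv, ← hα, mul_one, mul_zero, add_zero, zero_add]
    ring
  have huu : (inner ℂ u u : ℂ) = 1 - Complex.normSq α := by
    have e1 : (inner ℂ u u : ℂ) = inner ℂ x x - α * inner ℂ x y - (starRingEnd ℂ) α * inner ℂ y x
        + (starRingEnd ℂ) α * α * inner ℂ y y := by
      rw [hu, inner_sub_left, inner_sub_right, inner_sub_right, inner_smul_right,
        inner_smul_left, inner_smul_right, inner_smul_left]
      ring
    rw [e1, hxx, hyy, hxy', ← hα, Complex.normSq_eq_conj_mul_self]
    ring
  have hvv : (inner ℂ v v : ℂ) = 1 - Complex.normSq β := by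
    have e1 : (inner ℂ v v : ℂ) = inner ℂ z z - β * inner ℂ z y - (starRingEnd ℂ) β * inner ℂ y z
        + (starRingEnd ℂ) β * β * inner ℂ y y := by
      rw [hv, inner_sub_left, inner_sub_right, inner_sub_right, inner_smul_right,
        inner_smul_left, inner_smul_right, inner_smul_left]
      ring
    have hzy : (inner ℂ z y : ℂ) = (starRingEnd ℂ) β := by rw [hβ, inner_conj_symm]
    rw [e1, hzz, hyy, hzy, ← hβ, Complex.normSq_eq_conj_mul_self]
    ring
  have hnormu : ‖u‖ ^ 2 = 1 - Complex.normSq α := by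
    have := inner_self_eq_norm_sq_to_K (𝕜 := ℂ) u
    rw [huu] at this
    have := congrArg Complex.re this.symm
    exact_mod_cast this
  have hnormv : ‖v‖ ^ 2 = 1 - Complex.normSq β := by
    have := inner_self_eq_norm_sq_to_K (𝕜 := ℂ) v
    rw [hvv] at this
    have := congrArg Complex.re this.symm
    exact_mod_cast this
  have hαle : Complex.normSq α ≤ 1 := by
    have h1 : ‖α‖ ≤ 1 := by
      have := norm_inner_le_norm (𝕜 := ℂ) y x
      rwa [hy, hx, one_mul, ← hα] at this
    have h2 : ‖α‖ ^ 2 ≤ 1 := by nlinarith [norm_nonneg α]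
    rw [Complex.normSq_eq_norm_sq]
    exact h2
  have hβle : Complex.normSq β ≤ 1 := by
    have h1 : ‖β‖ ≤ 1 := by
      have := norm_inner_le_norm (𝕜 := ℂ) y z
      rwa [hy, hz, one_mul, ← hβ] at this
    have h2 : ‖β‖ ^ 2 ≤ 1 := by nlinarith [norm_nonneg β]
    rw [Complex.normSq_eq_norm_sq]
    exact h2
  have huv : |(inner ℂ u v : ℂ).re| ≤ Real.sqrt (1 - Complex.normSq α) * Real.sqrt (1 - Complex.normSq β) := by
    have h1 : |(inner ℂ u v : ℂ).re| ≤ ‖(inner ℂ u v : ℂ)‖ := Complex.abs_re_le_norm _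
    have h2 : ‖(inner ℂ u v : ℂ)‖ ≤ ‖u‖ * ‖v‖ := norm_inner_le_norm u v
    have h3 : ‖u‖ = Real.sqrt (1 - Complex.normSq α) := by
      rw [← hnormu, Real.sqrt_sq (norm_nonneg u)]
    have h4 : ‖v‖ = Real.sqrt (1 - Complex.normSq β) := by
      rw [← hnormv, Real.sqrt_sq (norm_nonneg v)]
    calc |(inner ℂ u v : ℂ).re| ≤ ‖u‖ * ‖v‖ := h1.trans h2
    _ = _ := by rw [h3, h4]
  -- now pure real arithmetic
  have hre_xz : (inner ℂ x z : ℂ).re = α.re * β.re + α.im * β.im + (inner ℂ u v : ℂ).re := by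
    rw [hxz]
    simp [Complex.add_re, Complex.mul_re]
    try ring
  have hre_xy : (inner ℂ x y : ℂ).re = α.re := by rw [hxy']; simp
  have hre_yz : (inner ℂ y z : ℂ).re = β.re := rfl
  rw [hre_xz, hre_xy, hre_yz]
  set a := α.re; set b := α.im; set c := β.re; set e := β.im
  have hnα : Complex.normSq α = a ^ 2 + b ^ 2 := by rw [Complex.normSq_apply]; ring
  have hnβ : Complex.normSq β = c ^ 2 + e ^ 2 := by rw [Complex.normSq_apply]; ring
  rw [hnα] at huv hαle
  rw [hnβ] at huv hβle
  exact real_final a b c e _ hαle hβle huv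

end Sphere

section More
variable {n : ℕ}
open scoped MatrixOrder

lemma norm_emb_sq (X : Matrix (Fin n) (Fin n) ℂ) :
    ((‖emb X‖ : ℝ) : ℂ) ^ 2 = (Xᴴ * X).trace := by
  rw [← inner_emb X X, inner_self_eq_norm_sq_to_K]
  norm_num

lemma norm_emb_eq_one {X : Matrix (Fin n) (Fin n) ℂ} (h : (Xᴴ * X).trace = 1) :
    ‖emb X‖ = 1 := by
  have h1 : ((‖emb X‖ : ℝ) : ℂ) ^ 2 = 1 := by rw [norm_emb_sq, h]
  have h2 : ‖emb X‖ ^ 2 = 1 := by exact_mod_cast h1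
  rw [← Real.sqrt_sq (norm_nonneg (emb X)), h2, Real.sqrt_one]

lemma trace_unitary_mul_le (M W : Matrix (Fin n) (Fin n) ℂ) (hW : Wᴴ * W = 1) :
    ‖(W * M).trace‖ ≤ ((msqrt (Mᴴ * M)).trace).re := by
  obtain ⟨U, hU1, hU2, hM⟩ := polar M
  set P := msqrt (Mᴴ * M) with hP
  have hPpsd : P.PosSemidef := msqrt_posSemidef (posSemidef_conjTranspose_mul_self M)
  set S := msqrt P with hS
  have hSpsd : S.PosSemidef := msqrt_posSemidef hPpsd
  have hSS : S * S = P := msqrt_mul_self hPpsd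
  have hSh : Sᴴ = S := hSpsd.1
  set X := S * (W * U)ᴴ with hX
  have hXH : Xᴴ = W * U * S := by
    rw [hX, conjTranspose_mul, conjTranspose_conjTranspose, hSh]
  have hXY : Xᴴ * S = W * M := by
    rw [hXH, mul_assoc (W * U) S S, hSS, hM, mul_assoc]
  have h1 : ((W * M).trace) = inner ℂ (emb X) (emb S) := by rw [inner_emb, hXY]
  have hWU : (W * U)ᴴ * (W * U) = 1 := by
    rw [conjTranspose_mul, mul_assoc, ← mul_assoc Wᴴ W U, hW, one_mul, hU1]
  have hXX : Xᴴ * X = W * U * P * (W * U)ᴴ := by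
    rw [hXH, hX, mul_assoc (W * U) S (S * (W * U)ᴴ), ← mul_assoc S S ((W * U)ᴴ), hSS,
      ← mul_assoc]
  have htrX : (Xᴴ * X).trace = P.trace := by
    rw [hXX, Matrix.trace_mul_cycle, hWU, one_mul]
  have htrS : (Sᴴ * S).trace = P.trace := by rw [hSh, hSS]
  have hnX : ((‖emb X‖ : ℝ) : ℂ) ^ 2 = P.trace := by rw [norm_emb_sq, htrX]
  have hnS : ((‖emb S‖ : ℝ) : ℂ) ^ 2 = P.trace := by rw [norm_emb_sq, htrS]
  have hre : P.trace.re = ‖emb S‖ ^ 2 := by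
    have h' : ((‖emb S‖ ^ 2 : ℝ) : ℂ) = P.trace := by push_cast; exact hnS
    rw [← h']
    rfl
  have hXSeq : ‖emb X‖ = ‖emb S‖ := by
    have h3 : ‖emb X‖ ^ 2 = ‖emb S‖ ^ 2 := by
      have := hnX.trans hnS.symm
      exact_mod_cast this
    rw [← Real.sqrt_sq (norm_nonneg (emb X)), h3, Real.sqrt_sq (norm_nonneg (emb S))]
  calc ‖(W * M).trace‖ = ‖(inner ℂ (emb X) (emb S) : ℂ)‖ := by
        rw [h1]
  _ ≤ ‖emb X‖ * ‖emb S‖ := norm_inner_le_norm _ _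
  _ = ‖emb S‖ ^ 2 := by rw [hXSeq]; ring
  _ = P.trace.re := hre.symm

lemma msqrt_conj {X : Matrix (Fin n) (Fin n) ℂ} (hX : X.PosSemidef)
    (U : Matrix (Fin n) (Fin n) ℂ) (hU1 : Uᴴ * U = 1) (hU2 : U * Uᴴ = 1) :
    msqrt (Uᴴ * X * U) = Uᴴ * msqrt X * U := by
  have h1 : (Uᴴ * X * U).PosSemidef := hX.conjTranspose_mul_mul_same U
  have h2 : (Uᴴ * msqrt X * U).PosSemidef :=
    (msqrt_posSemidef hX).conjTranspose_mul_mul_same U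
  have haux : U * (Uᴴ * msqrt X * U) = msqrt X * U := by
    rw [← mul_assoc, ← mul_assoc, hU2, one_mul]
  have h3 : (Uᴴ * msqrt X * U) ^ 2 = Uᴴ * X * U := by
    rw [pow_two, mul_assoc (Uᴴ * msqrt X) U (Uᴴ * msqrt X * U), haux,
      mul_assoc Uᴴ (msqrt X) (msqrt X * U), ← mul_assoc (msqrt X) (msqrt X) U,
      msqrt_mul_self hX, ← mul_assoc]
  rw [msqrt_eq_cfc h1]
  exact CFC.sqrt_unique (by rw [← pow_two]; exact h3) (Matrix.PosSemidef.nonneg h2)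

lemma trace_conj_unitary (X U : Matrix (Fin n) (Fin n) ℂ) (hU2 : U * Uᴴ = 1) :
    (Uᴴ * X * U).trace = X.trace := by
  rw [Matrix.trace_mul_cycle, hU2, one_mul]

end More

lemma arccos_final {F1 F2 F3 r : ℝ} (h1 : |F1| ≤ 1) (h2 : |F2| ≤ 1) (h3 : r ≤ F3)
    (hr : F1 * F2 - Real.sqrt (1 - F1 ^ 2) * Real.sqrt (1 - F2 ^ 2) ≤ r) :
    Real.arccos F3 ≤ Real.arccos F1 + Real.arccos F2 := by
  by_cases hp : Real.pi ≤ Real.arccos F1 + Real.arccos F2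
  · exact le_trans (Real.arccos_le_pi F3) hp
  · push_neg at hp
    have ha1 := Real.arccos_nonneg F1
    have ha2 := Real.arccos_nonneg F2
    obtain ⟨h1l, h1r⟩ := abs_le.mp h1
    obtain ⟨h2l, h2r⟩ := abs_le.mp h2
    have hcos : Real.cos (Real.arccos F1 + Real.arccos F2)
        = F1 * F2 - Real.sqrt (1 - F1 ^ 2) * Real.sqrt (1 - F2 ^ 2) := by
      rw [Real.cos_add, Real.cos_arccos h1l h1r, Real.cos_arccos h2l h2r,
        Real.sin_arccos, Real.sin_arccos]
    have hle : Real.cos (Real.arccos F1 + Real.arccos F2) ≤ F3 := by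
      rw [hcos]; linarith
    calc Real.arccos F3 ≤ Real.arccos (Real.cos (Real.arccos F1 + Real.arccos F2)) :=
          by
            rw [Real.arccos, Real.arccos]
            have := Real.monotone_arcsin hle
            linarith
    _ = Real.arccos F1 + Real.arccos F2 :=
          Real.arccos_cos (by linarith) (le_of_lt hp)

theorem bures_angle_triangle_inequality {n : ℕ}
    (ρ σ τ : Matrix (Fin n) (Fin n) ℂ)
    (hρ : IsState ρ) (hσ : IsState σ) (hτ : IsState τ) :
    Real.arccos (fid ρ τ) ≤ Real.arccos (fid ρ σ) + Real.arccos (fid σ τ) := by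
  obtain ⟨hρp, hρt⟩ := hρ
  obtain ⟨hσp, hσt⟩ := hσ
  obtain ⟨hτp, hτt⟩ := hτ
  set A := msqrt ρ with hAdef
  set B := msqrt σ with hBdef
  set C := msqrt τ with hCdef
  have hAh : Aᴴ = A := msqrt_herm hρp
  have hBh : Bᴴ = B := msqrt_herm hσp
  have hCh : Cᴴ = C := msqrt_herm hτp
  have hAA : A * A = ρ := msqrt_mul_self hρp
  have hBB : B * B = σ := msqrt_mul_self hσp
  have hCC : C * C = τ := msqrt_mul_self hτp
  have hAσA : (A * σ * A).PosSemidef := by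
    have := hσp.mul_mul_conjTranspose_same A
    rwa [hAh] at this
  have hBτB : (B * τ * B).PosSemidef := by
    have := hτp.mul_mul_conjTranspose_same B
    rwa [hBh] at this
  -- polar decomposition 1 : B*A = U₁ * msqrt (A*σ*A)
  obtain ⟨U₁, hU₁1, hU₁2, hBA⟩ := polar (B * A)
  have hgram1 : (B * A)ᴴ * (B * A) = A * σ * A := by
    rw [conjTranspose_mul, hAh, hBh, mul_assoc A B (B * A), ← mul_assoc B B A, hBB, ← mul_assoc]
  rw [hgram1] at hBA
  -- polar decomposition 2 : C*B*U₁ = U₂ * msqrt (U₁ᴴ * (B*τ*B) * U₁)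
  obtain ⟨U₂, hU₂1, hU₂2, hM₂⟩ := polar (C * B * U₁)
  have hgram2 : (C * B * U₁)ᴴ * (C * B * U₁) = U₁ᴴ * (B * τ * B) * U₁ := by
    simp only [conjTranspose_mul, hBh, hCh, mul_assoc]
    rw [← mul_assoc C C, hCC]
  rw [hgram2] at hM₂
  have hRpsd : (U₁ᴴ * (B * τ * B) * U₁).PosSemidef := hBτB.conjTranspose_mul_mul_same U₁
  -- the three unit vectors
  set x := emb A with hxdef
  set y := emb (B * U₁) with hydef
  set z := emb (C * U₂) with hzdef
  have hx : ‖x‖ = 1 := by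
    apply norm_emb_eq_one
    rw [hAh, hAA, hρt]
  have hy : ‖y‖ = 1 := by
    apply norm_emb_eq_one
    have h : (B * U₁)ᴴ * (B * U₁) = U₁ᴴ * (Bᴴ * B) * U₁ := by
      simp only [conjTranspose_mul, mul_assoc]
    rw [h, trace_conj_unitary _ _ hU₁2, hBh, hBB, hσt]
  have hz : ‖z‖ = 1 := by
    apply norm_emb_eq_one
    have h : (C * U₂)ᴴ * (C * U₂) = U₂ᴴ * (Cᴴ * C) * U₂ := by
      simp only [conjTranspose_mul, mul_assoc]
    rw [h, trace_conj_unitary _ _ hU₂2, hCh, hCC, hτt]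
  -- inner ℂ products
  have hyx : (inner ℂ y x : ℂ) = (msqrt (A * σ * A)).trace := by
    rw [hydef, hxdef, inner_emb]
    have h : (B * U₁)ᴴ * A = U₁ᴴ * (B * A) := by
      rw [conjTranspose_mul, hBh, mul_assoc]
    rw [h, hBA, ← mul_assoc, hU₁1, one_mul]
  have hyz : (inner ℂ y z : ℂ) = (msqrt (B * τ * B)).trace := by
    rw [hydef, hzdef, inner_emb]
    have hE : (B * U₁)ᴴ * (C * U₂) = (C * B * U₁)ᴴ * U₂ := by
      simp only [conjTranspose_mul, hCh, hBh, mul_assoc]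
    rw [hE, hM₂, conjTranspose_mul, mul_assoc, hU₂1, mul_one, msqrt_herm hRpsd,
      msqrt_conj hBτB U₁ hU₁1 hU₁2, trace_conj_unitary _ _ hU₁2]
  have hxz : (inner ℂ x z : ℂ) = (A * (C * U₂)).trace := by
    rw [hxdef, hzdef, inner_emb, hAh]
  -- fidelity values
  have hconjyx : (starRingEnd ℂ) (inner ℂ y x : ℂ) = (inner ℂ x y : ℂ) := inner_conj_symm x y
  have hF1 : (inner ℂ x y : ℂ).re = fid ρ σ := by
    rw [← hconjyx, Complex.conj_re, hyx]
    rfl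
  have hF2 : (inner ℂ y z : ℂ).re = fid σ τ := by
    rw [hyz]
    rfl
  -- bound on inner ℂ x z
  have habs : ‖(inner ℂ x z : ℂ)‖ ≤ fid ρ τ := by
    have hconj : (U₂ᴴ * (C * A)).trace = (starRingEnd ℂ) ((A * (C * U₂)).trace) := by
      rw [show (starRingEnd ℂ) ((A * (C * U₂)).trace) = ((A * (C * U₂))ᴴ).trace from
        (Matrix.trace_conjTranspose _).symm]
      congr 1
      simp only [conjTranspose_mul, hAh, hCh, mul_assoc]
    have hb := trace_unitary_mul_le (C * A) U₂ᴴ (by rw [conjTranspose_conjTranspose, hU₂2])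
    have hgram3 : (C * A)ᴴ * (C * A) = A * τ * A := by
      rw [conjTranspose_mul, hAh, hCh, mul_assoc A C (C * A), ← mul_assoc C C A, hCC,
        ← mul_assoc]
    rw [hgram3] at hb
    calc ‖(inner ℂ x z : ℂ)‖ = ‖(U₂ᴴ * (C * A)).trace‖ := by
          rw [hxz, hconj, Complex.norm_conj]
    _ ≤ ((msqrt (A * τ * A)).trace).re := hb
    _ = fid ρ τ := rfl
  -- assemble
  have h1 : |(inner ℂ x y : ℂ).re| ≤ 1 := by
    have hn := norm_inner_le_norm (𝕜 := ℂ) x y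
    rw [hx, hy, one_mul] at hn
    exact le_trans (Complex.abs_re_le_norm _) hn
  have h2 : |(inner ℂ y z : ℂ).re| ≤ 1 := by
    have hn := norm_inner_le_norm (𝕜 := ℂ) y z
    rw [hy, hz, one_mul] at hn
    exact le_trans (Complex.abs_re_le_norm _) hn
  have h3 : (inner ℂ x z : ℂ).re ≤ fid ρ τ :=
    le_trans (Complex.re_le_norm _) habs
  have hs := sphere_ineq x y z hx hy hz
  rw [hF1] at hs h1
  rw [hF2] at hs h2
  exact arccos_final h1 h2 h3 hs
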